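/- Let n ≥ 2, 1 ≤ d ≤ n, and let t be a positive multiple of d with t ≥ 2 * d * log₂ n + d² * log₂ (Real.exp 1 * n / d). Then the random design on n items with 2t tests and column-sparsity t/d is d-disjunct (i.e., D-distinguishing for every subset D ⊆ Fin n with |D| = d) with probability at least 1 − 1/n. -/

import Mathlib

open Finset in
lemma descFac_bound (t : ℕ) : ∀ s, s ≤ t → 2 ^ s * t.descFactorial s ≤ (2*t).descFactorial s := by
  intro s
  induction s with
  | zero => simp
  | succ s ih =>
    intro hst
    have hs : s ≤ t := Nat.le_of_succ_le hst
    rw [Nat.descFactorial_succ, Nat.descFactorial_succ, pow_succ]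
    calc 2 ^ s * 2 * ((t - s) * t.descFactorial s)
        = (2 * (t - s)) * (2 ^ s * t.descFactorial s) := by ring
      _ ≤ (2*t - s) * ((2*t).descFactorial s) := by
          apply Nat.mul_le_mul _ (ih hs)
          omega
      _ = (2*t - s) * (2*t).descFactorial s := rfl

lemma choose_double (s t : ℕ) (hst : s ≤ t) : 2 ^ s * t.choose s ≤ (2*t).choose s := by
  rw [Nat.choose_eq_descFactorial_div_factorial, Nat.choose_eq_descFactorial_div_factorial,
    ← Nat.mul_div_assoc _ (Nat.factorial_dvd_descFactorial _ _)]
  exact Nat.div_le_div_right (descFac_bound t s hst)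

lemma choose_le_en_d (n d : ℕ) (hd : 1 ≤ d) : (n.choose d : ℝ) ≤ (Real.exp 1 * n / d) ^ d := by
  have hd0 : (0:ℝ) < d := by exact_mod_cast hd
  have h1 : (n.choose d : ℝ) ≤ (n:ℝ) ^ d / d.factorial := by
    have := Nat.choose_le_pow_div (α := ℝ) d n
    simpa using this
  refine h1.trans ?_
  have h2 : (d:ℝ) ^ d / d.factorial ≤ Real.exp 1 ^ d := by
    rw [Real.exp_one_pow]
    exact Real.pow_div_factorial_le_exp (x := d) hd0.le d
  have hfac : (0:ℝ) < d.factorial := by exact_mod_cast d.factorial_pos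
  rw [div_pow, mul_pow, div_le_div_iff₀ hfac (by positivity)]
  have h3 : (d:ℝ)^d ≤ Real.exp 1 ^ d * d.factorial := (div_le_iff₀ hfac).mp h2
  calc (n:ℝ)^d * (d:ℝ)^d = (d:ℝ)^d * (n:ℝ)^d := by ring
    _ ≤ (Real.exp 1 ^ d * d.factorial) * (n:ℝ)^d :=
        mul_le_mul_of_nonneg_right h3 (by positivity)
    _ = Real.exp 1 ^ d * (n:ℝ)^d * d.factorial := by ring

lemma key_bound (n t d s : ℕ) (hn : 2 ≤ n) (hd : 1 ≤ d) (hts : t = d * s)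
    (htb : 2 * (d : ℝ) * Real.logb 2 n
        + (d : ℝ) ^ 2 * Real.logb 2 (Real.exp 1 * n / d) ≤ t) :
    (n:ℝ)^2 * n.choose d ≤ 2 ^ s := by
  have hd0 : (0:ℝ) < d := by exact_mod_cast hd
  have hn0 : (0:ℝ) < n := by positivity
  have hend : (0:ℝ) < Real.exp 1 * n / d := by positivity
  set x : ℝ := (n:ℝ)^2 * (Real.exp 1 * n / d) ^ d with hxdef
  have hx : 0 < x := by positivity
  have hlogb : Real.logb 2 x = 2 * Real.logb 2 n + d * Real.logb 2 (Real.exp 1 * n / d) := by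
    rw [hxdef, Real.logb_mul (by positivity) (by positivity), Real.logb_pow, Real.logb_pow]
    push_cast
    ring
  have hs : Real.logb 2 x ≤ (s:ℝ) := by
    rw [hlogb]
    have hts' : (t:ℝ) = d * s := by exact_mod_cast hts
    rw [hts'] at htb
    nlinarith [htb]
  have hx2 : x ≤ 2 ^ s := by
    have := Real.rpow_le_rpow_of_exponent_le (x := 2) (by norm_num) hs
    rw [Real.rpow_logb (by norm_num) (by norm_num) hx, Real.rpow_natCast] at this
    exact this
  calc (n:ℝ)^2 * n.choose d ≤ (n:ℝ)^2 * (Real.exp 1 * n / d) ^ d :=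
        mul_le_mul_of_nonneg_left (choose_le_en_d n d hd) (by positivity)
    _ ≤ 2 ^ s := hx2

open Finset

lemma pair_bound (n m s : ℕ) (D : Finset (Fin n)) (j : Fin n) (hj : j ∉ D) :
    ((Fintype.piFinset (fun _ : Fin n => (Finset.univ : Finset (Fin m)).powersetCard s)).filter
       (fun S => S j ⊆ D.biUnion S)).card
      ≤ (D.card * s).choose s * (m.choose s) ^ (n - 1) := by
  classical
  set Ω' := Fintype.piFinset
    (fun _ : {i : Fin n // i ≠ j} => (Finset.univ : Finset (Fin m)).powersetCard s) with hΩ'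
  let Rext : ({i : Fin n // i ≠ j} → Finset (Fin m)) → Fin n → Finset (Fin m) :=
    fun R i => if h : i = j then ∅ else R ⟨i, h⟩
  set T := Ω'.sigma (fun R => (D.biUnion (Rext R)).powersetCard s) with hT
  have hcard : (((Fintype.piFinset
      (fun _ : Fin n => (Finset.univ : Finset (Fin m)).powersetCard s)).filter
      (fun S => S j ⊆ D.biUnion S)).card : ℕ) ≤ T.card := by
    apply Finset.card_le_card_of_injOn (fun S => ⟨fun k => S k, S j⟩)
    · intro S hS
      simp only [Finset.mem_coe, mem_filter, Fintype.mem_piFinset] at hS ⊢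
      obtain ⟨h1, h2⟩ := hS
      have hb : D.biUnion (Rext (fun k => S k)) = D.biUnion S := by
        apply Finset.biUnion_congr rfl
        intro k hk
        have hkj : k ≠ j := fun h => hj (h ▸ hk)
        simp [Rext, hkj]
      rw [mem_sigma]
      constructor
      · rw [hΩ', Fintype.mem_piFinset]
        intro k; exact h1 k
      · rw [hb, mem_powersetCard]
        refine ⟨h2, ?_⟩
        have := h1 j
        rw [mem_powersetCard] at this
        exact this.2
    · intro S hS S' hS' heq
      have h1 := congrArg Sigma.fst heq
      have h2 := congrArg Sigma.snd heq
      simp only at h1 h2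
      funext i
      by_cases hij : i = j
      · subst hij; exact h2
      · exact congrFun h1 ⟨i, hij⟩
  refine hcard.trans ?_
  rw [hT, Finset.card_sigma]
  have hbd : ∀ R ∈ Ω', ((D.biUnion (Rext R)).powersetCard s).card ≤ (D.card * s).choose s := by
    intro R hR
    rw [card_powersetCard]
    apply Nat.choose_le_choose
    calc (D.biUnion (Rext R)).card ≤ ∑ k ∈ D, (Rext R k).card := Finset.card_biUnion_le
      _ ≤ ∑ _k ∈ D, s := by
          apply Finset.sum_le_sum
          intro k _
          by_cases hkj : k = j
          · simp [Rext, hkj]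
          · simp only [Rext, hkj, dif_neg, not_false_iff]
            rw [hΩ', Fintype.mem_piFinset] at hR
            have := hR ⟨k, hkj⟩
            rw [mem_powersetCard] at this
            exact this.2.le
      _ = D.card * s := by rw [Finset.sum_const, smul_eq_mul]
  calc ∑ R ∈ Ω', ((D.biUnion (Rext R)).powersetCard s).card
      ≤ ∑ _R ∈ Ω', (D.card * s).choose s := Finset.sum_le_sum hbd
    _ = Ω'.card * (D.card * s).choose s := by rw [Finset.sum_const, smul_eq_mul]
    _ = (D.card * s).choose s * (m.choose s) ^ (n - 1) := by
        rw [hΩ', Fintype.card_piFinset]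
        simp only [card_powersetCard, card_univ, Fintype.card_fin, Finset.prod_const, card_univ]
        have hns : Fintype.card {i : Fin n // i ≠ j} = n - 1 := by
          rw [Fintype.card_subtype_compl, Fintype.card_subtype_eq, Fintype.card_fin]
        rw [hns, mul_comm]

/-- Let `n ≥ 2`, `1 ≤ d ≤ n`, and `t` a positive multiple of `d`
with `t ≥ 2·d·log₂ n + d²·log₂(e·n/d)`.  The random design on `n` items with
`2t` tests and column-sparsity `t/d` is `d`-disjunct (i.e., `D`-distinguishing
for every `D ⊆ Fin n` with `|D| = d`) with probability at least `1 - 1/n`. -/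
theorem prob_disjunct_ge (n t d : ℕ) (hn : 2 ≤ n) (hd : 1 ≤ d) (hdn : d ≤ n)
    (ht : 0 < t) (hdvd : d ∣ t)
    (htb : 2 * (d : ℝ) * Real.logb 2 n
        + (d : ℝ) ^ 2 * Real.logb 2 (Real.exp 1 * n / d) ≤ t) :
    1 - 1 / (n : ℝ) ≤
      (((Finset.univ.filter
            (fun S : Fin n → Finset (Fin (2 * t)) => ∀ i, (S i).card = t / d)).filter
          (fun S => ∀ D : Finset (Fin n), D.card = d →
            ∀ j ∉ D, ∃ a ∈ S j, ∀ k ∈ D, a ∉ S k)).card : ℝ) /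
        ((Finset.univ.filter
            (fun S : Fin n → Finset (Fin (2 * t)) => ∀ i, (S i).card = t / d)).card : ℝ) := by
  classical
  set s := t / d with hsdef
  have hts : t = d * s := (Nat.mul_div_cancel' hdvd).symm
  have hs1 : 1 ≤ s := by
    rcases Nat.eq_zero_or_pos s with h | h
    · exfalso; rw [h, Nat.mul_zero] at hts; omega
    · exact h
  have hst : s ≤ t := hsdef ▸ Nat.div_le_self t d
  have hs2t : s ≤ 2 * t := by omega
  set Ω := Finset.univ.filter
    (fun S : Fin n → Finset (Fin (2 * t)) => ∀ i, (S i).card = s) with hΩdef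
  have hΩpi : Ω = Fintype.piFinset
      (fun _ : Fin n => (Finset.univ : Finset (Fin (2*t))).powersetCard s) := by
    ext S
    simp [hΩdef, Fintype.mem_piFinset, Finset.mem_powersetCard]
  set C := (2 * t).choose s with hCdef
  have hC0 : 0 < C := Nat.choose_pos hs2t
  have hΩcard : Ω.card = C ^ n := by
    rw [hΩpi, Fintype.card_piFinset]
    simp [Finset.card_powersetCard, hCdef]
  set P : (Fin n → Finset (Fin (2 * t))) → Prop := fun S => ∀ D : Finset (Fin n), D.card = d →
    ∀ j ∉ D, ∃ a ∈ S j, ∀ k ∈ D, a ∉ S k with hPdef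
  set Bad := Ω.filter (fun S => ¬ P S) with hBaddef
  have hsplit : (Ω.filter P).card + Bad.card = Ω.card :=
    Finset.card_filter_add_card_filter_not _
  -- union bound
  set pairs := ((Finset.univ : Finset (Fin n)).powersetCard d) ×ˢ
    (Finset.univ : Finset (Fin n)) with hpairsdef
  have hBadsub : Bad ⊆ pairs.biUnion
      (fun p => Ω.filter (fun S => p.2 ∉ p.1 ∧ S p.2 ⊆ p.1.biUnion S)) := by
    intro S hS
    rw [hBaddef, Finset.mem_filter] at hS
    obtain ⟨hSΩ, hSP⟩ := hS
    simp only [hPdef] at hSP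
    push_neg at hSP
    obtain ⟨D, hDcard, j, hjD, hbad⟩ := hSP
    rw [Finset.mem_biUnion]
    refine ⟨(D, j), ?_, ?_⟩
    · rw [hpairsdef, Finset.mem_product]
      exact ⟨Finset.mem_powersetCard.mpr ⟨Finset.subset_univ _, hDcard⟩, Finset.mem_univ _⟩
    · rw [Finset.mem_filter]
      refine ⟨hSΩ, hjD, ?_⟩
      intro a ha
      obtain ⟨k, hk, hak⟩ := hbad a ha
      exact Finset.mem_biUnion.mpr ⟨k, hk, hak⟩
  have hpair : ∀ p ∈ pairs,
      (Ω.filter (fun S => p.2 ∉ p.1 ∧ S p.2 ⊆ p.1.biUnion S)).card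
        ≤ t.choose s * C ^ (n - 1) := by
    intro p hp
    rw [hpairsdef, Finset.mem_product, Finset.mem_powersetCard] at hp
    by_cases hj : p.2 ∈ p.1
    · rw [Finset.filter_false_of_mem (fun S _ => by simp [hj])]
      simp
    · calc (Ω.filter (fun S => p.2 ∉ p.1 ∧ S p.2 ⊆ p.1.biUnion S)).card
          ≤ ((Fintype.piFinset
              (fun _ : Fin n => (Finset.univ : Finset (Fin (2*t))).powersetCard s)).filter
              (fun S => S p.2 ⊆ p.1.biUnion S)).card := by
            apply Finset.card_le_card
            rw [← hΩpi]
            exact fun S hS => Finset.mem_filter.mpr ⟨(Finset.mem_filter.mp hS).1, (Finset.mem_filter.mp hS).2.2⟩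
        _ ≤ (p.1.card * s).choose s * ((2*t).choose s) ^ (n - 1) :=
            pair_bound n (2*t) s p.1 p.2 hj
        _ = t.choose s * C ^ (n - 1) := by rw [hp.1.2, ← hts, hCdef]
  have hpairscard : pairs.card = n.choose d * n := by
    rw [hpairsdef, Finset.card_product, Finset.card_powersetCard]
    simp
  have hBadcard : Bad.card ≤ n.choose d * n * (t.choose s * C ^ (n - 1)) := by
    calc Bad.card ≤ (pairs.biUnion
          (fun p => Ω.filter (fun S => p.2 ∉ p.1 ∧ S p.2 ⊆ p.1.biUnion S))).card :=
          Finset.card_le_card hBadsub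
      _ ≤ ∑ p ∈ pairs,
            (Ω.filter (fun S => p.2 ∉ p.1 ∧ S p.2 ⊆ p.1.biUnion S)).card :=
          Finset.card_biUnion_le
      _ ≤ ∑ _p ∈ pairs, t.choose s * C ^ (n - 1) := Finset.sum_le_sum hpair
      _ = n.choose d * n * (t.choose s * C ^ (n - 1)) := by
          rw [Finset.sum_const, smul_eq_mul, hpairscard]
  -- real arithmetic
  have hn0 : (0:ℝ) < n := by positivity
  have hC0R : (0:ℝ) < C := by exact_mod_cast hC0
  have hΩpos : (0:ℝ) < (Ω.card : ℝ) := by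
    rw [hΩcard]; push_cast; positivity
  have hkey : (n:ℝ)^2 * n.choose d * t.choose s ≤ C := by
    have h1 : (n:ℝ)^2 * n.choose d ≤ 2 ^ s := key_bound n t d s hn hd hts htb
    have h2 : (2:ℝ) ^ s * t.choose s ≤ C := by
      have := choose_double s t hst
      exact_mod_cast this
    calc (n:ℝ)^2 * n.choose d * t.choose s ≤ 2 ^ s * t.choose s :=
          mul_le_mul_of_nonneg_right h1 (by positivity)
      _ ≤ C := h2
  have hmain : (n:ℝ) * Bad.card ≤ Ω.card := by
    have hB : (Bad.card : ℝ) ≤ n.choose d * n * (t.choose s * C ^ (n - 1)) := by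
      exact_mod_cast hBadcard
    have hCn : (C:ℝ) * C ^ (n - 1) = C ^ n := by
      rw [← pow_succ']
      congr 1
      omega
    calc (n:ℝ) * Bad.card ≤ n * (n.choose d * n * (t.choose s * C ^ (n - 1))) :=
          mul_le_mul_of_nonneg_left hB hn0.le
      _ = ((n:ℝ)^2 * n.choose d * t.choose s) * C ^ (n - 1) := by ring
      _ ≤ C * C ^ (n - 1) :=
          mul_le_mul_of_nonneg_right hkey (by positivity)
      _ = (Ω.card : ℝ) := by rw [hCn, hΩcard]; push_cast; ring
  have hGR : ((Ω.filter P).card : ℝ) + Bad.card = Ω.card := by exact_mod_cast hsplit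
  rw [le_div_iff₀ hΩpos]
  have hBn : (Bad.card : ℝ) ≤ Ω.card / n := by
    rw [le_div_iff₀ hn0]
    nlinarith [hmain]
  have step : (1 - 1/(n:ℝ)) * Ω.card ≤ Ω.card - Bad.card := by
    have h1 : (1 - 1/(n:ℝ)) * Ω.card = Ω.card - Ω.card / n := by
      rw [sub_mul, one_mul, div_mul_eq_mul_div]
      ring
    rw [h1]
    linarith [hBn]
  calc (1 - 1/(n:ℝ)) * Ω.card ≤ Ω.card - Bad.card := step
    _ = ((Ω.filter P).card : ℝ) := by linarith [hGR]
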